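/- Let A be an n × m real matrix, let s ≤ n, and let μ : Fin n → ℝ be an antitone enumeration of the eigenvalues of the real symmetric matrix A Aᵀ. Then: (i) for every n × s real matrix U with Uᵀ U = I_s, ‖U Uᵀ A‖_F² ≤ ∑_{i < s} μ i; and (ii) there exists an n × s real matrix U with Uᵀ U = I_s and ‖U Uᵀ A‖_F² = ∑_{i < s} μ i. -/

import Mathlib

open Matrix Polynomial

lemma charpoly_diag {n : ℕ} (d : Fin n → ℝ) :
    (diagonal d).charpoly = ∏ i : Fin n, (X - C (d i)) := by
  have h : charmatrix (diagonal d) = diagonal (fun i => (X : ℝ[X]) - C (d i)) := by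
    ext i j
    by_cases hij : i = j
    · subst hij; simp [charmatrix_apply_eq]
    · rw [charmatrix_apply_ne _ _ _ hij, diagonal_apply_ne _ hij, diagonal_apply_ne _ hij]
      simp
  rw [Matrix.charpoly, h, det_diagonal]

lemma charpoly_conj {n : ℕ} (Q D : Matrix (Fin n) (Fin n) ℝ)
    (h1 : Q * Qᵀ = 1) :
    (Q * D * Qᵀ).charpoly = D.charpoly := by
  have hmap : ∀ M N : Matrix (Fin n) (Fin n) ℝ, (M * N).map (C : ℝ →+* ℝ[X]) =
      M.map C * N.map C := fun M N => Matrix.map_mul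
  have hQ1 : Q.map (C : ℝ →+* ℝ[X]) * (Qᵀ).map C = 1 := by
    rw [← hmap, h1, Matrix.map_one _ (map_zero C) (map_one C)]
  have key : charmatrix (Q * D * Qᵀ) =
      Q.map (C : ℝ →+* ℝ[X]) * charmatrix D * (Qᵀ).map C := by
    unfold charmatrix
    rw [RingHom.mapMatrix_apply, RingHom.mapMatrix_apply, mul_sub, sub_mul, hmap, hmap]
    congr 1
    rw [← (Matrix.scalar_commute (X : ℝ[X]) (fun r' => Commute.all _ _) (Q.map C)).eq,
      mul_assoc, hQ1, mul_one]
  rw [Matrix.charpoly, Matrix.charpoly, key, det_mul, det_mul, mul_right_comm, ← det_mul,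
    hQ1, det_one, one_mul]

lemma exists_perm_comp {n : ℕ} (e μ : Fin n → ℝ) (hμ : Antitone μ)
    (h : ∏ i : Fin n, (X - C (e i)) = ∏ i : Fin n, (X - C (μ i))) :
    ∃ σ : Equiv.Perm (Fin n), ∀ i, e (σ i) = μ i := by
  have hms : Multiset.map e Finset.univ.val = Multiset.map μ Finset.univ.val := by
    have he : ∏ i : Fin n, (X - C (e i)) =
        ((Multiset.map e Finset.univ.val).map fun a => X - C a).prod := by
      rw [Multiset.map_map]; rfl
    have hμ' : ∏ i : Fin n, (X - C (μ i)) =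
        ((Multiset.map μ Finset.univ.val).map fun a => X - C a).prod := by
      rw [Multiset.map_map]; rfl
    have := congrArg Polynomial.roots (he ▸ hμ' ▸ h)
    rwa [roots_multiset_prod_X_sub_C, roots_multiset_prod_X_sub_C] at this
  have hperm : List.Perm (List.ofFn e) (List.ofFn (μ ∘ ⇑(Fin.revPerm (n := n)))) := by
    rw [← Multiset.coe_eq_coe]
    have h1 : (↑(List.ofFn e) : Multiset ℝ) = Multiset.map e Finset.univ.val := by
      rw [Fin.univ_val_map]
    have h2 : (↑(List.ofFn (μ ∘ ⇑(Fin.revPerm (n := n)))) : Multiset ℝ) =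
        Multiset.map μ Finset.univ.val := by
      rw [Fin.univ_val_map]
      exact Multiset.coe_eq_coe.mpr ((Fin.revPerm).ofFn_comp_perm μ)
    rw [h1, h2, hms]
  set σ₀ := Tuple.sort e with hσ₀
  have hmono : Monotone (e ∘ σ₀) := Tuple.monotone_sort e
  have hmono2 : Monotone (μ ∘ ⇑(Fin.revPerm (n := n))) := by
    intro a b hab
    exact hμ (by simpa using Fin.rev_le_rev.mpr hab)
  have : e ∘ σ₀ = μ ∘ ⇑(Fin.revPerm (n := n)) := by
    apply List.ofFn_injective
    apply List.Perm.eq_of_sortedLE hmono.sortedLE_ofFn hmono2.sortedLE_ofFn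
    exact ((σ₀.ofFn_comp_perm e).trans hperm)
  refine ⟨(Fin.revPerm).trans σ₀, fun i => ?_⟩
  have := congrFun this (Fin.revPerm i)
  simpa using this

theorem projection_frobenius_sq_eq_sum_top_eigenvalues
    {n m : ℕ} (A : Matrix (Fin n) (Fin m) ℝ) (s : ℕ) (hs : s ≤ n)
    (μ : Fin n → ℝ) (hμ : Antitone μ)
    (hchar : (A * Aᵀ).charpoly = ∏ i : Fin n, (X - C (μ i))) :
    (∀ U : Matrix (Fin n) (Fin s) ℝ, Uᵀ * U = 1 →
        ((U * Uᵀ * A)ᵀ * (U * Uᵀ * A)).trace ≤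
          ∑ i ∈ Finset.univ.filter (fun i : Fin n => (i : ℕ) < s), μ i) ∧
    (∃ U : Matrix (Fin n) (Fin s) ℝ, Uᵀ * U = 1 ∧
        ((U * Uᵀ * A)ᵀ * (U * Uᵀ * A)).trace =
          ∑ i ∈ Finset.univ.filter (fun i : Fin n => (i : ℕ) < s), μ i) := by
  set S := A * Aᵀ with hSdef
  have hSh : S.IsHermitian := by
    have := isHermitian_mul_conjTranspose_self A
    rwa [conjTranspose_eq_transpose_of_trivial] at this
  set V : Matrix (Fin n) (Fin n) ℝ := (hSh.eigenvectorUnitary : Matrix (Fin n) (Fin n) ℝ) with hV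
  set e : Fin n → ℝ := hSh.eigenvalues with he
  have hspec : S = V * diagonal e * Vᵀ := by
    have := hSh.spectral_theorem
    simpa [Matrix.star_eq_conjTranspose, conjTranspose_eq_transpose_of_trivial, hV, he] using this
  have hVV : Vᵀ * V = 1 := by
    have := (Matrix.mem_unitaryGroup_iff'.mp (hSh.eigenvectorUnitary).2)
    rwa [Matrix.star_eq_conjTranspose, conjTranspose_eq_transpose_of_trivial] at this
  have hVV' : V * Vᵀ = 1 := mul_eq_one_comm.mp hVV
  -- match μ with the eigenvalues
  obtain ⟨σ, hσ⟩ : ∃ σ : Equiv.Perm (Fin n), ∀ i, e (σ i) = μ i := by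
    apply exists_perm_comp e μ hμ
    rw [← charpoly_diag e, ← charpoly_conj V (diagonal e) hVV', ← hspec, hchar]
  set Q : Matrix (Fin n) (Fin n) ℝ := V.submatrix id σ with hQ
  have hpt : ∀ a b : Fin n, (Vᵀ * V) a b = (1 : Matrix (Fin n) (Fin n) ℝ) a b :=
    fun a b => by rw [hVV]
  have hQQ : Qᵀ * Q = 1 := by
    ext j k
    have h1 : (Qᵀ * Q) j k = (Vᵀ * V) (σ j) (σ k) := by
      simp [Matrix.mul_apply, Matrix.transpose_apply, hQ, Matrix.submatrix_apply]
    rw [h1, hpt]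
    simp [Matrix.one_apply, EmbeddingLike.apply_eq_iff_eq]
  have hQQ' : Q * Qᵀ = 1 := mul_eq_one_comm.mp hQQ
  have hSQ : S = Q * diagonal μ * Qᵀ := by
    rw [hspec]
    ext a b
    have hL : (V * diagonal e * Vᵀ) a b = ∑ j : Fin n, V a j * e j * V b j := by
      rw [Matrix.mul_apply]
      simp only [Matrix.mul_diagonal, Matrix.transpose_apply]
    have hR : (Q * diagonal μ * Qᵀ) a b = ∑ j : Fin n, V a (σ j) * μ j * V b (σ j) := by
      rw [Matrix.mul_apply]
      simp only [Matrix.mul_diagonal, Matrix.transpose_apply, hQ, Matrix.submatrix_apply, id_eq]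
    rw [hL, hR, ← Equiv.sum_comp σ (fun j => V a j * e j * V b j)]
    exact Finset.sum_congr rfl fun j _ => by rw [hσ j]
  -- trace formula
  have keytr : ∀ U : Matrix (Fin n) (Fin s) ℝ, Uᵀ * U = 1 →
      ((U * Uᵀ * A)ᵀ * (U * Uᵀ * A)).trace
        = ∑ i : Fin n, μ i * ∑ j : Fin s, ((Qᵀ * U) i j)^2 := by
    intro U hU
    have h1 : (U * Uᵀ * A)ᵀ * (U * Uᵀ * A) = (Aᵀ * U) * (Uᵀ * A) := by
      simp only [transpose_mul, transpose_transpose]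
      calc Aᵀ * (U * Uᵀ) * (U * Uᵀ * A) = (Aᵀ * U) * (Uᵀ * U) * (Uᵀ * A) := by
            simp only [Matrix.mul_assoc]
        _ = (Aᵀ * U) * (Uᵀ * A) := by rw [hU, Matrix.mul_one]
    rw [h1, Matrix.trace_mul_comm]
    have h2 : (Uᵀ * A) * (Aᵀ * U) = ((Qᵀ * U)ᵀ) * diagonal μ * (Qᵀ * U) := by
      have : (Uᵀ * A) * (Aᵀ * U) = Uᵀ * S * U := by
        rw [hSdef]; simp only [Matrix.mul_assoc]
      rw [this, hSQ, transpose_mul, transpose_transpose]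
      simp only [Matrix.mul_assoc]
    rw [h2]
    set W := Qᵀ * U with hWdef
    have htr : ∀ j : Fin s, (Wᵀ * diagonal μ * W) j j = ∑ i : Fin n, μ i * (W i j)^2 := by
      intro j
      rw [Matrix.mul_apply]
      simp only [Matrix.mul_diagonal, Matrix.transpose_apply]
      exact Finset.sum_congr rfl fun i _ => by ring
    rw [Matrix.trace]
    simp only [Matrix.diag_apply]
    rw [Finset.sum_congr rfl fun j _ => htr j, Finset.sum_comm]
    exact Finset.sum_congr rfl fun i _ => (Finset.mul_sum _ _ _).symm
  -- threshold
  obtain ⟨t, ht1, ht2⟩ : ∃ t : ℝ, (∀ i : Fin n, (i : ℕ) < s → t ≤ μ i) ∧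
      (∀ i : Fin n, s ≤ (i : ℕ) → μ i ≤ t) := by
    rcases lt_or_eq_of_le hs with h | h
    · exact ⟨μ ⟨s, h⟩, fun i hi => hμ (by exact Fin.le_def.mpr (le_of_lt hi)),
        fun i hi => hμ (Fin.le_def.mpr hi)⟩
    · rcases Nat.eq_zero_or_pos n with hn | hn
      · exact ⟨0, fun i _ => absurd i.isLt (by omega), fun i _ => absurd i.isLt (by omega)⟩
      · exact ⟨μ ⟨n - 1, by omega⟩, fun i _ => hμ (Fin.le_def.mpr (Nat.le_pred_of_lt i.isLt)),
          fun i hi => absurd (lt_of_lt_of_le i.isLt h.symm.le) (not_lt.mpr hi)⟩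
  have hcard : (Finset.univ.filter (fun i : Fin n => (i : ℕ) < s)).card = s := by
    rw [Finset.card_filter, Fin.sum_univ_eq_sum_range (fun i => if i < s then 1 else 0),
      ← Finset.card_filter]
    have : (Finset.range n).filter (· < s) = Finset.range s := by
      ext i; simp; omega
    rw [this, Finset.card_range]
  constructor
  · -- upper bound
    intro U hU
    rw [keytr U hU]
    set W := Qᵀ * U with hWdef
    set c : Fin n → ℝ := fun i => ∑ j : Fin s, (W i j)^2 with hc
    have hWW : Wᵀ * W = 1 := by
      rw [hWdef, transpose_mul, transpose_transpose, Matrix.mul_assoc,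
        ← Matrix.mul_assoc Q, hQQ', Matrix.one_mul, hU]
    have hc0 : ∀ i, 0 ≤ c i := fun i => Finset.sum_nonneg fun j _ => sq_nonneg _
    have hcsum : ∑ i, c i = (s : ℝ) := by
      rw [hc]
      rw [Finset.sum_comm]
      have h3 : ∀ j : Fin s, ∑ i : Fin n, (W i j)^2 = (Wᵀ * W) j j := by
        intro j
        simp [Matrix.mul_apply, Matrix.transpose_apply, sq]
      rw [Finset.sum_congr rfl fun j _ => h3 j]
      have : ∑ j : Fin s, (Wᵀ * W) j j = (Wᵀ * W).trace := rfl
      rw [this, hWW, Matrix.trace_one]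
      simp
    have hc1 : ∀ i, c i ≤ 1 := by
      intro i
      set P := W * Wᵀ with hP
      have hPP : P * P = P := by
        rw [hP, Matrix.mul_assoc, ← Matrix.mul_assoc Wᵀ, hWW, Matrix.one_mul]
      have hPs : ∀ a b, P b a = P a b := by
        intro a b
        simp [hP, Matrix.mul_apply, Matrix.transpose_apply, mul_comm]
      have hcP : c i = P i i := by
        simp [hc, hP, Matrix.mul_apply, Matrix.transpose_apply, sq]
      have h2 : P i i = ∑ k, (P i k)^2 := by
        conv_lhs => rw [← hPP]
        rw [Matrix.mul_apply]
        exact Finset.sum_congr rfl fun k _ => by rw [hPs i k, sq]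
      have h3 : (P i i)^2 ≤ P i i := by
        conv_rhs => rw [h2]
        exact Finset.single_le_sum (f := fun k => (P i k)^2) (fun k _ => sq_nonneg _)
          (Finset.mem_univ i)
      have h4 : 0 ≤ P i i := hcP ▸ hc0 i
      rw [hcP]
      nlinarith
    -- final chain
    have hsplit : ∑ i, μ i * c i = ∑ i, (μ i - t) * c i + t * (s : ℝ) := by
      rw [← hcsum, Finset.mul_sum, ← Finset.sum_add_distrib]
      exact Finset.sum_congr rfl fun i _ => by ring
    have hsum_split := Finset.sum_filter_add_sum_filter_not Finset.univ
      (fun i : Fin n => (i : ℕ) < s) (fun i => (μ i - t) * c i)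
    have hFle : ∑ i ∈ Finset.univ.filter (fun i : Fin n => (i : ℕ) < s), (μ i - t) * c i
        ≤ ∑ i ∈ Finset.univ.filter (fun i : Fin n => (i : ℕ) < s), (μ i - t) :=
      Finset.sum_le_sum fun i hi =>
        mul_le_of_le_one_right (sub_nonneg.mpr (ht1 i (Finset.mem_filter.mp hi).2)) (hc1 i)
    have hNle : ∑ i ∈ Finset.univ.filter (fun i : Fin n => ¬ (i : ℕ) < s), (μ i - t) * c i ≤ 0 :=
      Finset.sum_nonpos fun i hi =>
        mul_nonpos_of_nonpos_of_nonneg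
          (sub_nonpos.mpr (ht2 i (not_lt.mp (Finset.mem_filter.mp hi).2))) (hc0 i)
    have hFsum : ∑ i ∈ Finset.univ.filter (fun i : Fin n => (i : ℕ) < s), (μ i - t)
        = (∑ i ∈ Finset.univ.filter (fun i : Fin n => (i : ℕ) < s), μ i) - t * s := by
      rw [Finset.sum_sub_distrib, Finset.sum_const, hcard, nsmul_eq_mul]
      ring
    linarith
  · -- existence
    set U : Matrix (Fin n) (Fin s) ℝ := Q.submatrix id (Fin.castLE hs) with hUdef
    have hQpt : ∀ a b : Fin n, (Qᵀ * Q) a b = (1 : Matrix (Fin n) (Fin n) ℝ) a b :=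
      fun a b => by rw [hQQ]
    have hU : Uᵀ * U = 1 := by
      ext j k
      have h1 : (Uᵀ * U) j k = (Qᵀ * Q) (Fin.castLE hs j) (Fin.castLE hs k) := by
        simp [Matrix.mul_apply, Matrix.transpose_apply, hUdef, Matrix.submatrix_apply]
      rw [h1, hQpt]
      simp [Matrix.one_apply, Fin.castLE_inj, Fin.ext_iff]
    refine ⟨U, hU, ?_⟩
    rw [keytr U hU]
    have hWval : ∀ (i : Fin n) (j : Fin s), (Qᵀ * U) i j
        = (1 : Matrix (Fin n) (Fin n) ℝ) i (Fin.castLE hs j) := by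
      intro i j
      have h1 : (Qᵀ * U) i j = (Qᵀ * Q) i (Fin.castLE hs j) := by
        simp [Matrix.mul_apply, Matrix.transpose_apply, hUdef, Matrix.submatrix_apply]
      rw [h1, hQpt]
    have hci : ∀ i : Fin n, ∑ j : Fin s, ((Qᵀ * U) i j)^2
        = if (i : ℕ) < s then (1 : ℝ) else 0 := by
      intro i
      simp only [hWval]
      by_cases his : (i : ℕ) < s
      · rw [if_pos his]
        rw [Finset.sum_eq_single (⟨(i : ℕ), his⟩ : Fin s)]
        · have : i = Fin.castLE hs ⟨(i : ℕ), his⟩ := by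
            apply Fin.ext; simp
          simp [Matrix.one_apply, ← this]
        · intro j _ hj
          have hne : ¬ i = Fin.castLE hs j := by
            intro h
            have hji : (j : ℕ) = (i : ℕ) := by
              simpa [Fin.ext_iff] using h.symm
            exact hj (Fin.ext (by simp [hji]))
          simp [Matrix.one_apply, hne]
        · intro h; exact absurd (Finset.mem_univ _) h
      · rw [if_neg his]
        apply Finset.sum_eq_zero
        intro j _
        have : ¬ i = Fin.castLE hs j := by
          intro h
          exact his (by rw [h]; exact j.isLt)
        simp [Matrix.one_apply, this]
    rw [Finset.sum_congr rfl fun i _ => by rw [hci i]]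
    rw [Finset.sum_filter]
    exact Finset.sum_congr rfl fun i _ => by split <;> simp
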